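/- For every t ∈ [0,T), the function γ is integrable on the interval (t,T) and exp(−∫_t^T γ(s) ds) = β(t); equivalently, ∫_t^T γ(s) ds = −log β(t). -/

import Mathlib

open MeasureTheory Real Set Filter

/-- Standard normal cdf `N(x)`. -/
noncomputable def stdCdf (x : ℝ) : ℝ := ∫ y in Set.Iic x, Real.exp (-y ^ 2 / 2) / Real.sqrt (2 * Real.pi)

/-- Standard normal pdf `n(x)`. -/
noncomputable def stdPdf (x : ℝ) : ℝ := Real.exp (-x ^ 2 / 2) / Real.sqrt (2 * Real.pi)

/-- `β(t) = 1 − (2σ/√(2r+σ²))·(N(√((2r+σ²)(T−t))) − 1/2)`. -/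
noncomputable def betaDY (T σ r t : ℝ) : ℝ :=
  1 - 2 * σ / Real.sqrt (2 * r + σ ^ 2) *
    (stdCdf (Real.sqrt ((2 * r + σ ^ 2) * (T - t))) - 1 / 2)

/-- `γ(t) = σ·n(√((2r+σ²)(T−t)))/(√(T−t)·β(t))`. -/
noncomputable def gammaDY (T σ r t : ℝ) : ℝ :=
  σ * stdPdf (Real.sqrt ((2 * r + σ ^ 2) * (T - t))) / (Real.sqrt (T - t) * betaDY T σ r t)

lemma stdPdf_nonneg (x : ℝ) : 0 ≤ stdPdf x :=
  div_nonneg (Real.exp_nonneg _) (Real.sqrt_nonneg _)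

lemma stdPdf_le_one (x : ℝ) : stdPdf x ≤ 1 := by
  have h1 : Real.exp (-x ^ 2 / 2) ≤ 1 := by
    rw [Real.exp_le_one_iff]
    have : (0:ℝ) ≤ x ^ 2 / 2 := by positivity
    linarith
  have h2 : (1:ℝ) ≤ Real.sqrt (2 * Real.pi) := by
    rw [show (1:ℝ) = Real.sqrt 1 by simp]
    exact Real.sqrt_le_sqrt (by nlinarith [Real.pi_gt_three])
  calc stdPdf x ≤ 1 / 1 := div_le_div₀ zero_le_one h1 zero_lt_one h2
      _ = 1 := by norm_num

lemma continuous_stdPdf : Continuous stdPdf := by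
  unfold stdPdf; fun_prop

lemma integrable_stdPdf : Integrable stdPdf := by
  have h : Integrable (fun y : ℝ => Real.exp (-(1/2) * y ^ 2)) :=
    integrable_exp_neg_mul_sq (by norm_num)
  have := h.div_const (Real.sqrt (2 * Real.pi))
  refine this.congr (Eventually.of_forall fun y => ?_)
  unfold stdPdf; ring_nf

lemma integral_stdPdf : ∫ y, stdPdf y = 1 := by
  unfold stdPdf
  have : ∀ y : ℝ, Real.exp (-y ^ 2 / 2) = Real.exp (-(1/2) * y ^ 2) := by
    intro y; ring_nf
  simp_rw [this, integral_div, integral_gaussian]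
  rw [div_eq_one_iff_eq (by positivity)]
  rw [show Real.pi / (1/2) = 2 * Real.pi by ring]

lemma stdCdf_eq (x : ℝ) : stdCdf x = ∫ y in Set.Iic x, stdPdf y := rfl

lemma stdPdf_even (y : ℝ) : stdPdf (-y) = stdPdf y := by unfold stdPdf; ring_nf

lemma stdCdf_zero : stdCdf 0 = 1 / 2 := by
  have h1 := integral_comp_neg_Iic (0:ℝ) stdPdf
  simp_rw [stdPdf_even, neg_zero] at h1
  have h2 : (∫ y in Iic (0:ℝ), stdPdf y) + ∫ y in Ioi (0:ℝ), stdPdf y = 1 := by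
    rw [intervalIntegral.integral_Iic_add_Ioi integrable_stdPdf.integrableOn
      integrable_stdPdf.integrableOn, integral_stdPdf]
  rw [stdCdf_eq]
  linarith

lemma stdCdf_le_one (x : ℝ) : stdCdf x ≤ 1 := by
  rw [stdCdf_eq, ← integral_stdPdf]
  exact setIntegral_le_integral integrable_stdPdf (Eventually.of_forall stdPdf_nonneg)

lemma stdCdf_sub (a b : ℝ) : stdCdf b - stdCdf a = ∫ y in a..b, stdPdf y := by
  rw [stdCdf_eq, stdCdf_eq]
  exact intervalIntegral.integral_Iic_sub_Iic integrable_stdPdf.integrableOn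
    integrable_stdPdf.integrableOn

lemma half_le_stdCdf {x : ℝ} (hx : 0 ≤ x) : 1 / 2 ≤ stdCdf x := by
  have h := stdCdf_sub 0 x
  have h2 : 0 ≤ ∫ y in (0:ℝ)..x, stdPdf y :=
    intervalIntegral.integral_nonneg hx fun y _ => stdPdf_nonneg y
  rw [stdCdf_zero] at h
  linarith

lemma hasDerivAt_stdCdf (x : ℝ) : HasDerivAt stdCdf (stdPdf x) x := by
  have key : stdCdf = fun u => (∫ s in (0:ℝ)..u, stdPdf s) + stdCdf 0 := by
    funext u
    rw [← stdCdf_sub]; ring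
  rw [key]
  exact (intervalIntegral.integral_hasDerivAt_right
    integrable_stdPdf.intervalIntegrable
    (continuous_stdPdf.stronglyMeasurableAtFilter _ _)
    continuous_stdPdf.continuousAt).add_const _

lemma continuous_stdCdf : Continuous stdCdf :=
  continuous_iff_continuousAt.2 fun x => (hasDerivAt_stdCdf x).continuousAt

lemma m_pos {σ r : ℝ} (hσ : 0 < σ) (hr : 0 < r) :
    0 < 1 - σ / Real.sqrt (2 * r + σ ^ 2) := by
  have hlt : σ < Real.sqrt (2 * r + σ ^ 2) := by
    have := Real.sqrt_lt_sqrt (sq_nonneg σ) (show σ ^ 2 < 2 * r + σ ^ 2 by linarith)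
    rwa [Real.sqrt_sq hσ.le] at this
  have h2 : σ / Real.sqrt (2 * r + σ ^ 2) < 1 := (div_lt_one (by positivity)).2 hlt
  linarith

lemma betaDY_bounds {σ r T s : ℝ} (hσ : 0 < σ) (hr : 0 < r) (hs : s ≤ T) :
    1 - σ / Real.sqrt (2 * r + σ ^ 2) ≤ betaDY T σ r s ∧ betaDY T σ r s ≤ 1 := by
  have hc : (0:ℝ) < 2 * r + σ ^ 2 := by positivity
  have hsc : 0 < Real.sqrt (2 * r + σ ^ 2) := Real.sqrt_pos.2 hc
  set x := Real.sqrt ((2 * r + σ ^ 2) * (T - s)) with hx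
  have hN1 : 1 / 2 ≤ stdCdf x := half_le_stdCdf (Real.sqrt_nonneg _)
  have hN2 : stdCdf x ≤ 1 := stdCdf_le_one x
  have hq : 0 < 2 * σ / Real.sqrt (2 * r + σ ^ 2) := by positivity
  unfold betaDY
  rw [← hx]
  constructor
  · have h1 : 2 * σ / Real.sqrt (2 * r + σ ^ 2) * (stdCdf x - 1 / 2)
        ≤ 2 * σ / Real.sqrt (2 * r + σ ^ 2) * (1 / 2) :=
      mul_le_mul_of_nonneg_left (by linarith) hq.le
    have h2 : 2 * σ / Real.sqrt (2 * r + σ ^ 2) * (1 / 2) = σ / Real.sqrt (2 * r + σ ^ 2) := by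
      ring
    linarith
  · nlinarith

lemma betaDY_pos {σ r T s : ℝ} (hσ : 0 < σ) (hr : 0 < r) (hs : s ≤ T) :
    0 < betaDY T σ r s :=
  lt_of_lt_of_le (m_pos hσ hr) (betaDY_bounds hσ hr hs).1

lemma betaDY_endpoint (T σ r : ℝ) : betaDY T σ r T = 1 := by
  unfold betaDY
  simp [stdCdf_zero]

lemma continuous_betaDY (T σ r : ℝ) : Continuous (betaDY T σ r) := by
  unfold betaDY
  exact continuous_const.sub (continuous_const.mul
    ((continuous_stdCdf.comp (Real.continuous_sqrt.comp
      (continuous_const.mul (continuous_const.sub continuous_id)))).sub continuous_const))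

lemma hasDerivAt_betaDY {σ r T s : ℝ} (hσ : 0 < σ) (hr : 0 < r) (hs : s < T) :
    HasDerivAt (betaDY T σ r)
      (σ * stdPdf (Real.sqrt ((2 * r + σ ^ 2) * (T - s))) / Real.sqrt (T - s)) s := by
  have hc : (0:ℝ) < 2 * r + σ ^ 2 := by positivity
  have hTs : (0:ℝ) < T - s := by linarith
  have hpos : 0 < (2 * r + σ ^ 2) * (T - s) := mul_pos hc hTs
  have h1 : HasDerivAt (fun u : ℝ => (2 * r + σ ^ 2) * (T - u)) ((2 * r + σ ^ 2) * (-1)) s :=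
    ((hasDerivAt_id s).const_sub T).const_mul _
  have h2 := (Real.hasDerivAt_sqrt hpos.ne').comp s h1
  have h3 := (hasDerivAt_stdCdf (Real.sqrt ((2 * r + σ ^ 2) * (T - s)))).comp s h2
  have h4 : HasDerivAt (betaDY T σ r)
      (-(2 * σ / Real.sqrt (2 * r + σ ^ 2) *
        (stdPdf (Real.sqrt ((2 * r + σ ^ 2) * (T - s))) *
          (1 / (2 * Real.sqrt ((2 * r + σ ^ 2) * (T - s))) * ((2 * r + σ ^ 2) * (-1)))))) s := by
    unfold betaDY
    exact ((h3.sub_const _).const_mul _).const_sub 1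
  convert h4 using 1
  have hsc : 0 < Real.sqrt (2 * r + σ ^ 2) := Real.sqrt_pos.2 hc
  have hst : 0 < Real.sqrt (T - s) := Real.sqrt_pos.2 hTs
  have hsq : Real.sqrt (2 * r + σ ^ 2) ^ 2 = 2 * r + σ ^ 2 := Real.sq_sqrt hc.le
  rw [Real.sqrt_mul hc.le, ← hsq]
  field_simp
  rw [Real.sqrt_sq hsc.le]

lemma hasDerivAt_log_betaDY {σ r T s : ℝ} (hσ : 0 < σ) (hr : 0 < r) (hs : s < T) :
    HasDerivAt (fun u => Real.log (betaDY T σ r u)) (gammaDY T σ r s) s := by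
  have hβ : 0 < betaDY T σ r s := betaDY_pos hσ hr hs.le
  have h := (hasDerivAt_betaDY hσ hr hs).log hβ.ne'
  convert h using 1
  unfold gammaDY
  rw [div_div]

theorem gammaDY_integral (K T σ r : ℝ) (hK : 0 < K) (hT : 0 < T) (hσ : 0 < σ) (hr : 0 < r)
    (t : ℝ) (ht0 : 0 ≤ t) (htT : t < T) :
    IntegrableOn (gammaDY T σ r) (Set.Ioo t T) ∧
      Real.exp (-(∫ s in t..T, gammaDY T σ r s)) = betaDY T σ r t ∧
      ∫ s in t..T, gammaDY T σ r s = -Real.log (betaDY T σ r t) := by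
  have hc : (0:ℝ) < 2 * r + σ ^ 2 := by positivity
  set m : ℝ := 1 - σ / Real.sqrt (2 * r + σ ^ 2) with hm
  have hm0 : 0 < m := m_pos hσ hr
  -- the dominating function
  have h0 : IntervalIntegrable (fun x : ℝ => x ^ (-(1/2) : ℝ)) volume 0 (T - t) :=
    intervalIntegral.intervalIntegrable_rpow' (by norm_num)
  have h1 : IntervalIntegrable (fun s : ℝ => (T - s) ^ (-(1/2) : ℝ)) volume t T := by
    have := h0.comp_sub_left T
    simpa using this.symm
  have hdom : IntervalIntegrable (fun s : ℝ => (σ / m) * (T - s) ^ (-(1/2) : ℝ)) volume t T :=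
    h1.const_mul _
  have hdomIoo : IntegrableOn (fun s : ℝ => (σ / m) * (T - s) ^ (-(1/2) : ℝ)) (Set.Ioo t T) :=
    (intervalIntegrable_iff_integrableOn_Ioo_of_le htT.le).1 hdom
  -- measurability of gammaDY on Ioo t T
  have hcontγ : ContinuousOn (gammaDY T σ r) (Set.Ioo t T) := by
    unfold gammaDY
    apply ContinuousOn.div
    · exact (continuous_const.mul (continuous_stdPdf.comp (Real.continuous_sqrt.comp
        (continuous_const.mul (continuous_const.sub continuous_id))))).continuousOn
    · exact ((Real.continuous_sqrt.comp (continuous_const.sub continuous_id)).mul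
        (continuous_betaDY T σ r)).continuousOn
    · intro s hs
      have hst : 0 < Real.sqrt (T - s) := Real.sqrt_pos.2 (by linarith [hs.2])
      have hβ : 0 < betaDY T σ r s := betaDY_pos hσ hr hs.2.le
      positivity
  -- integrability of gammaDY on Ioo t T
  have hIntOn : IntegrableOn (gammaDY T σ r) (Set.Ioo t T) := by
    refine hdomIoo.mono' (hcontγ.aestronglyMeasurable measurableSet_Ioo) ?_
    rw [ae_restrict_iff' measurableSet_Ioo]
    refine Eventually.of_forall fun s hs => ?_
    have hTs : 0 < T - s := by linarith [hs.2]
    have hst : 0 < Real.sqrt (T - s) := Real.sqrt_pos.2 hTs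
    have hβ : 0 < betaDY T σ r s := betaDY_pos hσ hr hs.2.le
    have hβm : m ≤ betaDY T σ r s := (betaDY_bounds hσ hr hs.2.le).1
    have hγnn : 0 ≤ gammaDY T σ r s := by
      unfold gammaDY
      have := stdPdf_nonneg (Real.sqrt ((2 * r + σ ^ 2) * (T - s)))
      positivity
    rw [Real.norm_of_nonneg hγnn]
    have hrp : (T - s) ^ (-(1/2) : ℝ) = (Real.sqrt (T - s))⁻¹ := by
      rw [Real.rpow_neg hTs.le, Real.sqrt_eq_rpow]
    rw [hrp]
    have hb1 : gammaDY T σ r s ≤ σ * 1 / (Real.sqrt (T - s) * m) := by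
      unfold gammaDY
      exact div_le_div₀ (by positivity)
        (mul_le_mul_of_nonneg_left (stdPdf_le_one _) hσ.le)
        (by positivity) (mul_le_mul_of_nonneg_left hβm hst.le)
    calc gammaDY T σ r s ≤ σ * 1 / (Real.sqrt (T - s) * m) := hb1
      _ = σ / m * (Real.sqrt (T - s))⁻¹ := by
          rw [mul_one, div_mul_eq_div_mul_one_div]
          field_simp
  have hII : IntervalIntegrable (gammaDY T σ r) volume t T :=
    (intervalIntegrable_iff_integrableOn_Ioo_of_le htT.le).2 hIntOn
  -- FTC
  have hβt : 0 < betaDY T σ r t := betaDY_pos hσ hr htT.le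
  have hcont : ContinuousOn (fun u => Real.log (betaDY T σ r u)) (Set.Icc t T) := by
    apply ContinuousOn.log (continuous_betaDY T σ r).continuousOn
    exact fun s hs => (betaDY_pos hσ hr hs.2).ne'
  have hderiv : ∀ x ∈ Set.Ioo t T,
      HasDerivWithinAt (fun u => Real.log (betaDY T σ r u)) (gammaDY T σ r x) (Set.Ioi x) x :=
    fun x hx => (hasDerivAt_log_betaDY hσ hr hx.2).hasDerivWithinAt
  have key : ∫ s in t..T, gammaDY T σ r s =
      Real.log (betaDY T σ r T) - Real.log (betaDY T σ r t) :=
    intervalIntegral.integral_eq_sub_of_hasDeriv_right_of_le htT.le hcont hderiv hII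
  rw [betaDY_endpoint, Real.log_one, zero_sub] at key
  refine ⟨hIntOn, ?_, key⟩
  rw [key, neg_neg, Real.exp_log hβt]
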